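/- Let X be a square-integrable real random variable on a probability space, and let 𝒢₁ ⊆ 𝒢₂ be sub-σ-algebras. Then Var(X − E[X|𝒢₂] + E[X|𝒢₁]) = Var(X) − Var(E[X|𝒢₂]) + Var(E[X|𝒢₁]) ≤ Var(X), whenever Var(E[X|𝒢₂]) ≥ Var(E[X|𝒢₁]). -/

import Mathlib

open MeasureTheory ProbabilityTheory

private lemma aux_int_mul {Ω : Type*} {mΩ : MeasurableSpace Ω} {μ : Measure Ω}
    {f g : Ω → ℝ} (hf : MemLp f 2 μ) (hg : MemLp g 2 μ) :
    Integrable (fun ω => f ω * g ω) μ := by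
  have h := hg.smul (φ := f) hf (p := 2) (q := 2) (r := 1)
    (hpqr := ⟨by rw [inv_one, ENNReal.inv_two_add_inv_two]⟩)
  rw [memLp_one_iff_integrable] at h
  simpa [Pi.smul_apply, smul_eq_mul, Pi.mul_def] using h

private lemma aux_memℒp_two_condexp {Ω : Type*} {m : MeasurableSpace Ω} {mΩ : MeasurableSpace Ω}
    {μ : Measure Ω} [IsProbabilityMeasure μ] (hm : m ≤ mΩ)
    {X : Ω → ℝ} (hX : MemLp X 2 μ) : MemLp (μ[X|m]) 2 μ := by
  have h_eq : ((condExpL2 ℝ ℝ hm (hX.toLp X) : Lp ℝ 2 μ) : Ω → ℝ) =ᵐ[μ] μ[X|m] := by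
    refine ae_eq_condExp_of_forall_setIntegral_eq hm (hX.integrable one_le_two)
      (fun s _ hμs => integrableOn_Lp_of_measure_ne_top _ fact_one_le_two_ennreal.elim hμs.ne)
      (fun s hs hμs => ?_) (aestronglyMeasurable_condExpL2 (𝕜 := ℝ) hm (hX.toLp X))
    calc ∫ x in s, ((condExpL2 ℝ ℝ hm (hX.toLp X) : Lp ℝ 2 μ) : Ω → ℝ) x ∂μ
        = ∫ x in s, (hX.toLp X : Ω → ℝ) x ∂μ := integral_condExpL2_eq hm _ hs hμs.ne
      _ = ∫ x in s, X x ∂μ :=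
          setIntegral_congr_ae (hm s hs) (hX.coeFn_toLp.mono fun x hx _ => hx)
  exact (Lp.memLp _).ae_eq h_eq

private lemma aux_integral_mul_condexp {Ω : Type*} {m : MeasurableSpace Ω}
    {mΩ : MeasurableSpace Ω} {μ : Measure Ω} [IsProbabilityMeasure μ] (hm : m ≤ mΩ)
    {X g : Ω → ℝ} (hX : Integrable X μ) (hgm : StronglyMeasurable[m] g)
    (hXg : Integrable (fun ω => g ω * X ω) μ) :
    ∫ ω, g ω * X ω ∂μ = ∫ ω, g ω * (μ[X|m]) ω ∂μ := by
  have h : μ[g * X|m] =ᵐ[μ] g * μ[X|m] := condExp_mul_of_stronglyMeasurable_left hgm hXg hX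
  calc ∫ ω, g ω * X ω ∂μ = ∫ ω, (μ[g * X|m]) ω ∂μ := by
        rw [integral_condExp hm]; rfl
    _ = ∫ ω, g ω * (μ[X|m]) ω ∂μ := integral_congr_ae (h.mono fun ω hω => hω)

theorem stmt_2 {Ω : Type*} {mΩ : MeasurableSpace Ω} (μ : Measure Ω) [IsProbabilityMeasure μ]
    (m1 m2 : MeasurableSpace Ω) (h12 : m1 ≤ m2) (h2 : m2 ≤ mΩ)
    (X : Ω → ℝ) (hX : MemLp X 2 μ)
    (hvar : variance (μ[X|m1]) μ ≤ variance (μ[X|m2]) μ) :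
    variance (fun ω => X ω - (μ[X|m2]) ω + (μ[X|m1]) ω) μ =
      variance X μ - variance (μ[X|m2]) μ + variance (μ[X|m1]) μ ∧
    variance (fun ω => X ω - (μ[X|m2]) ω + (μ[X|m1]) ω) μ ≤ variance X μ := by
  have h1 : m1 ≤ mΩ := h12.trans h2
  set E2 := μ[X|m2] with hE2def
  set E1 := μ[X|m1] with hE1def
  have hE2 : MemLp E2 2 μ := aux_memℒp_two_condexp h2 hX
  have hE1 : MemLp E1 2 μ := aux_memℒp_two_condexp h1 hX
  have hY : MemLp (fun ω => X ω - E2 ω + E1 ω) 2 μ := (hX.sub hE2).add hE1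
  have hXint : Integrable X μ := hX.integrable one_le_two
  have hE2int : Integrable E2 μ := hE2.integrable one_le_two
  have hE1int : Integrable E1 μ := hE1.integrable one_le_two
  have hXX : Integrable (fun ω => X ω * X ω) μ := aux_int_mul hX hX
  have hE2E2 : Integrable (fun ω => E2 ω * E2 ω) μ := aux_int_mul hE2 hE2
  have hE1E1 : Integrable (fun ω => E1 ω * E1 ω) μ := aux_int_mul hE1 hE1
  have hE2X : Integrable (fun ω => E2 ω * X ω) μ := aux_int_mul hE2 hX
  have hE1X : Integrable (fun ω => E1 ω * X ω) μ := aux_int_mul hE1 hX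
  have hE1E2 : Integrable (fun ω => E1 ω * E2 ω) μ := aux_int_mul hE1 hE2
  have hA : ∫ ω, E2 ω * X ω ∂μ = ∫ ω, E2 ω * E2 ω ∂μ := by
    rw [aux_integral_mul_condexp h2 hXint stronglyMeasurable_condExp hE2X]
  have hB : ∫ ω, E1 ω * X ω ∂μ = ∫ ω, E1 ω * E1 ω ∂μ := by
    rw [aux_integral_mul_condexp h1 hXint stronglyMeasurable_condExp hE1X]
  have hC : ∫ ω, E1 ω * E2 ω ∂μ = ∫ ω, E1 ω * E1 ω ∂μ := by
    rw [aux_integral_mul_condexp h1 hE2int stronglyMeasurable_condExp hE1E2]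
    refine integral_congr_ae ?_
    filter_upwards [condExp_condExp_of_le h12 h2 (f := X)] with ω hω
    rw [hω]
  have hmE2 : ∫ ω, E2 ω ∂μ = ∫ ω, X ω ∂μ := integral_condExp h2
  have hmE1 : ∫ ω, E1 ω ∂μ = ∫ ω, X ω ∂μ := integral_condExp h1
  have i2 : Integrable (fun ω => X ω * X ω + E2 ω * E2 ω) μ := hXX.add hE2E2
  have i3 : Integrable (fun ω => X ω * X ω + E2 ω * E2 ω + E1 ω * E1 ω) μ := i2.add hE1E1
  have i4 : Integrable
      (fun ω => X ω * X ω + E2 ω * E2 ω + E1 ω * E1 ω - 2 * (E2 ω * X ω)) μ :=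
    i3.sub (hE2X.const_mul 2)
  have i5 : Integrable (fun ω =>
      X ω * X ω + E2 ω * E2 ω + E1 ω * E1 ω - 2 * (E2 ω * X ω) + 2 * (E1 ω * X ω)) μ :=
    i4.add (hE1X.const_mul 2)
  have hYsq : ∫ ω, (X ω - E2 ω + E1 ω) ^ 2 ∂μ =
      ∫ ω, X ω * X ω ∂μ + ∫ ω, E2 ω * E2 ω ∂μ + ∫ ω, E1 ω * E1 ω ∂μ
        - 2 * ∫ ω, E2 ω * X ω ∂μ + 2 * ∫ ω, E1 ω * X ω ∂μ - 2 * ∫ ω, E1 ω * E2 ω ∂μ := by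
    have hfun : (fun ω => (X ω - E2 ω + E1 ω) ^ 2) =
        fun ω => X ω * X ω + E2 ω * E2 ω + E1 ω * E1 ω - 2 * (E2 ω * X ω)
          + 2 * (E1 ω * X ω) - 2 * (E1 ω * E2 ω) := funext fun ω => by ring
    rw [hfun, integral_sub i5 (hE1E2.const_mul 2), integral_add i4 (hE1X.const_mul 2),
      integral_sub i3 (hE2X.const_mul 2), integral_add i2 hE1E1, integral_add hXX hE2E2,
      integral_const_mul, integral_const_mul, integral_const_mul]
  have isub : Integrable (fun ω => X ω - E2 ω) μ := hXint.sub hE2int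
  have hveq : variance (fun ω => X ω - E2 ω + E1 ω) μ =
      variance X μ - variance E2 μ + variance E1 μ := by
    rw [variance_eq_sub hY, variance_eq_sub hX, variance_eq_sub hE2, variance_eq_sub hE1]
    simp only [Pi.pow_apply]
    have e1 : ∫ ω, (X ω - E2 ω + E1 ω) ∂μ = ∫ ω, X ω ∂μ := by
      rw [integral_add isub hE1int, integral_sub hXint hE2int, hmE2, hmE1]
      ring
    have sq : ∀ f : Ω → ℝ, (∫ ω, f ω ^ 2 ∂μ) = ∫ ω, f ω * f ω ∂μ := fun f => by
      simp_rw [sq]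
    rw [hYsq, e1, sq X, sq E2, sq E1, hA, hB, hC, hmE2, hmE1]
    ring
  refine ⟨hveq, ?_⟩
  rw [hveq]
  linarith
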